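/- Let λ_1 > 0 > λ_2 ≥ λ_3 ≥ ... ≥ λ_n with s_1 := λ_1 + λ_2 + ... + λ_n ≥ 0. Then the n×n matrix whose first column is (s_1, s_1-λ_2, ..., s_1-λ_n)^T, whose (i,j) entry for j ≥ 2, i ≠ j equals -λ_j, and whose diagonal entries in positions 2,...,n are 0, is nonnegative, irreducible, and has spectrum {λ_1, λ_2, ..., λ_n}. -/
import Mathlib


open Matrix Polynomial

def MatNonneg {n : ℕ} (A : Matrix (Fin n) (Fin n) ℝ) : Prop := ∀ i j, 0 ≤ A i j

def MatIrred {n : ℕ} (A : Matrix (Fin n) (Fin n) ℝ) : Prop :=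
  ∀ i j : Fin n, i ≠ j → Relation.TransGen (fun a b => 0 < A a b) i j

theorem stmt6 (n : ℕ) (μ : Fin (n + 2) → ℝ)
    (hpos : 0 < μ 0)
    (hneg : ∀ i : Fin (n + 2), i ≠ 0 → μ i < 0)
    (hmono : ∀ i j : Fin (n + 2), i ≤ j → μ j ≤ μ i)
    (hs : 0 ≤ ∑ i, μ i)
    (A : Matrix (Fin (n + 2)) (Fin (n + 2)) ℝ)
    (hA : ∀ i j : Fin (n + 2), A i j =
      if j = 0 then (if i = 0 then ∑ k, μ k else (∑ k, μ k) - μ i)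
      else (if i = j then 0 else -μ j)) :
    MatNonneg A ∧ MatIrred A ∧ A.charpoly = ∏ i, (X - C (μ i)) := by
  refine ⟨?_, ?_, ?_⟩
  · -- nonnegativity
    intro i j
    rw [hA]
    by_cases hj : j = 0
    · rw [if_pos hj]
      by_cases hi : i = 0
      · rw [if_pos hi]; exact hs
      · rw [if_neg hi]; have := hneg i hi; linarith
    · rw [if_neg hj]
      by_cases hij : i = j
      · rw [if_pos hij]
      · rw [if_neg hij]; have := hneg j hj; linarith
  · -- irreducibility
    intro i j hij
    apply Relation.TransGen.single
    rw [hA]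
    by_cases hj : j = 0
    · subst hj
      rw [if_pos rfl, if_neg hij]
      have := hneg i hij; linarith
    · rw [if_neg hj, if_neg (by exact fun h => hij h)]
      have := hneg j hj; linarith
  · -- charpoly
    -- row sums of A are all μ 0
    have hArow : ∀ i, ∑ k, A i k = μ 0 := by
      intro i
      by_cases hi : i = 0
      · subst hi
        have h1 : ∀ k : Fin (n + 2), A 0 k =
            -μ k + (if k = 0 then (∑ t, μ t) + μ 0 else 0) := by
          intro k; rw [hA]
          by_cases hk : k = 0
          · subst hk; simp
          · have : (0 : Fin (n + 2)) ≠ k := fun h => hk h.symm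
            simp [hk, this]
        simp only [h1, Finset.sum_add_distrib, Finset.sum_neg_distrib,
          Finset.sum_ite_eq', Finset.mem_univ, if_true]
        ring
      · have h1 : ∀ k : Fin (n + 2), A i k =
            -μ k + (if k = 0 then (∑ t, μ t) + μ 0 - μ i else 0)
              + (if k = i then μ i else 0) := by
          intro k; rw [hA]
          by_cases hk : k = 0
          · subst hk
            have hik : i ≠ (0 : Fin (n + 2)) := hi
            simp [hi, Ne.symm hik]
            ring
          · by_cases hki : i = k
            · subst hki; simp [hk]
            · simp [hk, hki, Ne.symm hki]
        simp only [h1, Finset.sum_add_distrib, Finset.sum_neg_distrib,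
          Finset.sum_ite_eq', Finset.mem_univ, if_true]
        ring
    -- row sums of the charmatrix
    have hrow : ∀ i, ∑ k, charmatrix A i k = X - C (μ 0) := by
      intro i
      have h1 : ∀ k, charmatrix A i k = (if i = k then (X : ℝ[X]) else 0) - C (A i k) := by
        intro k
        by_cases h : i = k
        · subst h; rw [charmatrix_apply_eq, if_pos rfl]
        · rw [charmatrix_apply_ne _ _ _ h, if_neg h]; ring
      simp only [h1, Finset.sum_sub_distrib, Finset.sum_ite_eq, Finset.mem_univ, if_true]
      rw [← map_sum, hArow i]
    set B : Matrix (Fin (n + 2)) (Fin (n + 2)) ℝ[X] := charmatrix A with hB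
    set Nm : Matrix (Fin (n + 2)) (Fin (n + 2)) ℝ[X] :=
      Matrix.of fun i j => if i = 0 then 0 else if j = 0 then 1 else 0 with hNm
    have hNmul : ∀ (M : Matrix (Fin (n + 2)) (Fin (n + 2)) ℝ[X]) i j,
        (Nm * M) i j = if i = 0 then 0 else M 0 j := by
      intro M i j
      rw [Matrix.mul_apply]
      by_cases hi : i = 0
      · simp [hNm, hi]
      · simp only [hNm, Matrix.of_apply, if_neg hi]
        have h1 : ∀ k : Fin (n + 2), (if k = 0 then (1 : ℝ[X]) else 0) * M k j
            = if k = 0 then M k j else 0 := by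
          intro k; split <;> simp
        simp only [h1, Finset.sum_ite_eq', Finset.mem_univ, if_true]
    have hmulN : ∀ (M : Matrix (Fin (n + 2)) (Fin (n + 2)) ℝ[X]) i j,
        (M * Nm) i j = if j = 0 then (∑ k, M i k) - M i 0 else 0 := by
      intro M i j
      rw [Matrix.mul_apply]
      by_cases hj : j = 0
      · rw [if_pos hj]
        have h1 : ∀ k : Fin (n + 2), M i k * Nm k j
            = M i k - (if k = 0 then M i k else 0) := by
          intro k
          simp only [hNm, Matrix.of_apply, hj]
          by_cases hk : k = 0 <;> simp [hk]
        simp only [h1, Finset.sum_sub_distrib, Finset.sum_ite_eq', Finset.mem_univ, if_true]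
      · rw [if_neg hj]
        apply Finset.sum_eq_zero
        intro k _
        simp [hNm, hj]
    have hNN : Nm * Nm = 0 := by
      ext i j
      rw [hNmul]
      by_cases hi : i = 0 <;> simp [hi, hNm]
    have hLR : (1 - Nm) * (1 + Nm) = 1 := by
      rw [sub_mul, one_mul, mul_add, mul_one, hNN, add_zero]
      abel
    set T : Matrix (Fin (n + 2)) (Fin (n + 2)) ℝ[X] :=
      Matrix.of fun i j => if i = j then X - C (μ i) else if i = 0 then C (μ j) else 0 with hT
    have hexp : (1 - Nm) * B * (1 + Nm) = B + B * Nm - Nm * B - Nm * B * Nm := by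
      noncomm_ring
    have hBT : (1 - Nm) * B * (1 + Nm) = T := by
      rw [hexp]
      refine Matrix.ext fun i j => ?_
      rw [Matrix.sub_apply, Matrix.sub_apply, Matrix.add_apply, hmulN B, hNmul B,
        hmulN (Nm * B)]
      by_cases hi : i = 0 <;> by_cases hj : j = 0
      · subst hi; subst hj
        have h0 : ∀ k, (Nm * B) (0 : Fin (n + 2)) k = 0 := by
          intro k; rw [hNmul]; simp
        simp [h0, hrow 0, hT]
      · subst hi
        have hij : (0 : Fin (n + 2)) ≠ j := fun h => hj h.symm
        have hBij : B 0 j = C (μ j) := by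
          rw [hB, charmatrix_apply_ne _ _ _ hij, hA, if_neg hj, if_neg hij]
          simp
        simp [hj, hT, hij, hBij]
      · subst hj
        have h0 : ∀ k, (Nm * B) i k = B 0 k := by
          intro k; rw [hNmul, if_neg hi]
        simp [hi, h0, hrow i, hrow 0, hT]
      · by_cases hij : i = j
        · subst hij
          have hBii : B i i = X := by
            rw [hB, charmatrix_apply_eq, hA, if_neg hj, if_pos rfl]
            simp
          have hB0i : B 0 i = C (μ i) := by
            rw [hB, charmatrix_apply_ne _ _ _ (Ne.symm hi), hA, if_neg hj,
              if_neg (Ne.symm hi)]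
            simp
          simp [hi, hj, hT, hBii, hB0i]
        · have h0j : (0 : Fin (n + 2)) ≠ j := fun h => hj h.symm
          have hBij : B i j = C (μ j) := by
            rw [hB, charmatrix_apply_ne _ _ _ hij, hA, if_neg hj, if_neg hij]
            simp
          have hB0j : B 0 j = C (μ j) := by
            rw [hB, charmatrix_apply_ne _ _ _ h0j, hA, if_neg hj, if_neg h0j]
            simp
          simp [hi, hj, hij, hT, hBij, hB0j]
    have hTtri : T.BlockTriangular id := by
      intro i j hlt
      have hij : i ≠ j := fun h => by subst h; exact lt_irrefl _ hlt
      have hi : i ≠ 0 := by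
        intro h; subst h
        exact absurd hlt (by simpa using Fin.zero_le j)
      simp [hT, Ne.symm hij, fun h : i = j => hij h, hi]
    have hdetT : T.det = ∏ i, (X - C (μ i)) := by
      rw [Matrix.det_of_upperTriangular hTtri]
      apply Finset.prod_congr rfl
      intro i _
      simp [hT]
    have hdetB : B.det = T.det := by
      have h2 : (1 - Nm).det * (1 + Nm).det = 1 := by
        rw [← Matrix.det_mul, hLR, Matrix.det_one]
      have h1 : ((1 - Nm) * B * (1 + Nm)).det = B.det := by
        rw [Matrix.det_mul, Matrix.det_mul]
        calc (1 - Nm).det * B.det * (1 + Nm).det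
            = ((1 - Nm).det * (1 + Nm).det) * B.det := by ring
          _ = B.det := by rw [h2, one_mul]
      rw [← h1, hBT]
    rw [Matrix.charpoly, ← hB, hdetB, hdetT]
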